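/- Let a₀ a₃ < 0, a₂ ≠ 0, a₃ ≠ 0, 24 a₁ a₃ ≠ 1, and T* = −1/(12 a₀ a₃) > 0. With P and c as above, suppose c ≠ 0 or P(x,y) ≠ 0. Then |u(x,y,t)| → ∞ as t ↗ T*, where u(x,y,t) = a₀/(1 + 12 a₀ a₃ t) P(x,y) − c ln(1 + 12 a₀ a₃ t) + a₄ x + a₅ y + a₆. -/

import Mathlib

noncomputable section

open Filter Real Set in
private theorem key (k L₀ A c : ℝ) (hk : k < 0) (hc : A ≠ 0 ∨ c ≠ 0) :
    Tendsto (fun t => |A / (1 + k * t) - c * Real.log (1 + k * t) + L₀|)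
      (nhdsWithin (-1 / k) (Set.Iio (-1 / k))) Filter.atTop := by
  have hk0 : k ≠ 0 := hk.ne
  have hs : Tendsto (fun t => 1 + k * t) (nhdsWithin (-1 / k) (Set.Iio (-1 / k)))
      (nhdsWithin 0 (Set.Ioi 0)) := by
    apply tendsto_nhdsWithin_of_tendsto_nhds_of_eventually_within
    · have h : Tendsto (fun t => 1 + k * t) (nhds (-1 / k)) (nhds (1 + k * (-1 / k))) :=
        (continuous_const.add (continuous_const.mul continuous_id)).tendsto _
      rw [show 1 + k * (-1 / k) = 0 by field_simp; norm_num] at h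
      exact h.mono_left nhdsWithin_le_nhds
    · filter_upwards [self_mem_nhdsWithin] with t ht
      have h1 : k * t > k * (-1 / k) := mul_lt_mul_of_neg_left ht hk
      have h2 : k * (-1 / k) = -1 := by field_simp
      simp only [Set.mem_Ioi]
      linarith [h2 ▸ h1]
  have houter : Tendsto (fun s => |A / s - c * Real.log s + L₀|)
      (nhdsWithin 0 (Set.Ioi 0)) Filter.atTop := by
    rcases eq_or_ne A 0 with hA | hA
    · have hcne : c ≠ 0 := (hc.resolve_left (by simp [hA]))
      have hlog : Tendsto Real.log (nhdsWithin 0 (Set.Ioi 0)) atBot :=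
        Real.tendsto_log_nhdsGT_zero
      have hmain : Tendsto (fun s => |(-c) * Real.log s + L₀|)
          (nhdsWithin 0 (Set.Ioi 0)) atTop := by
        rcases lt_or_gt_of_ne hcne with hneg | hpos
        · have : Tendsto (fun s => (-c) * Real.log s) (nhdsWithin 0 (Set.Ioi 0)) atBot :=
            hlog.const_mul_atBot (by linarith)
          exact tendsto_abs_atBot_atTop.comp (tendsto_atBot_add_const_right _ L₀ this)
        · have : Tendsto (fun s => (-c) * Real.log s) (nhdsWithin 0 (Set.Ioi 0)) atTop :=
            hlog.const_mul_atBot_of_neg (by linarith)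
          exact tendsto_abs_atTop_atTop.comp (tendsto_atTop_add_const_right _ L₀ this)
      apply hmain.congr
      intro s
      rw [hA]
      ring_nf
    · have h1 : Tendsto (fun s : ℝ => |s⁻¹|) (nhdsWithin 0 (Set.Ioi 0)) Filter.atTop :=
        tendsto_abs_atTop_atTop.comp tendsto_inv_nhdsGT_zero
      have hsl : Tendsto (fun s : ℝ => Real.log s * s) (nhdsWithin 0 (Set.Ioi 0)) (nhds 0) := by
        simpa using tendsto_log_mul_rpow_nhdsGT_zero (r := 1) zero_lt_one
      have hid : Tendsto (fun s : ℝ => s) (nhdsWithin 0 (Set.Ioi 0)) (nhds 0) :=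
        tendsto_id.mono_left nhdsWithin_le_nhds
      have h2 : Tendsto (fun s : ℝ => |A - c * (Real.log s * s) + s * L₀|)
          (nhdsWithin 0 (Set.Ioi 0)) (nhds |A|) := by
        have h0 : Tendsto (fun s : ℝ => A - c * (Real.log s * s) + s * L₀)
            (nhdsWithin 0 (Set.Ioi 0)) (nhds (A - c * 0 + 0 * L₀)) :=
          (tendsto_const_nhds.sub (tendsto_const_nhds.mul hsl)).add (hid.mul_const L₀)
        have h := h0.abs
        simpa using h
      have habs : (0:ℝ) < |A| := abs_pos.mpr hA
      have h3 := h1.atTop_mul_pos habs h2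
      apply h3.congr'
      filter_upwards [self_mem_nhdsWithin] with s hs0
      have hsne : s ≠ 0 := ne_of_gt hs0
      rw [← abs_mul]
      congr 1
      field_simp
  exact houter.comp hs


/-- The quartic spatial profile `P(x,y)` of the general non-radial family. -/
def P (a₁ a₂ a₃ x y : ℝ) : ℝ :=
  (3456 * a₁ ^ 3 * a₃ ^ 3 + 432 * a₁ ^ 2 * a₃ ^ 2 - 1) / (46656 * a₂ ^ 2 * a₃ ^ 3) * x ^ 4 +
    a₁ * x ^ 2 * y ^ 2 + a₂ * x * y ^ 3 +
    (288 * a₁ ^ 3 * a₃ ^ 2 + 12 * a₁ * a₃ - 1) / (648 * a₂ * a₃ ^ 2) * x ^ 3 * y +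
    9 * a₂ ^ 4 * a₃ / (24 * a₁ * a₃ - 1) * y ^ 4

/-- The logarithmic coefficient `c` of the general non-radial family. -/
def C (a₁ a₂ a₃ : ℝ) : ℝ :=
  1 / (12 * a₃) *
    (4 * a₁ + (3456 * a₁ ^ 3 * a₃ ^ 3 + 432 * a₁ ^ 2 * a₃ ^ 2 - 1) / (1944 * a₂ ^ 2 * a₃ ^ 3) +
      216 * a₂ ^ 2 * a₃ / (24 * a₁ * a₃ - 1))

/-- The general non-radial family of explicit solutions. -/
def U (a₀ a₁ a₂ a₃ a₄ a₅ a₆ x y t : ℝ) : ℝ :=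
  a₀ / (1 + 12 * a₀ * a₃ * t) * P a₁ a₂ a₃ x y -
    C a₁ a₂ a₃ * Real.log (1 + 12 * a₀ * a₃ * t) + a₄ * x + a₅ * y + a₆

/-- If `a₀a₃ < 0` (so that `T* = −1/(12a₀a₃) > 0`) and either `c ≠ 0` or `P(x,y) ≠ 0`,
then `|u(x,y,t)| → ∞` as `t ↗ T*`. -/
theorem stmt16 (a₀ a₁ a₂ a₃ a₄ a₅ a₆ x y : ℝ)
    (h₀₃ : a₀ * a₃ < 0) (h₂ : a₂ ≠ 0) (h₃ : a₃ ≠ 0) (h₁₃ : 24 * a₁ * a₃ ≠ 1)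
    (h : C a₁ a₂ a₃ ≠ 0 ∨ P a₁ a₂ a₃ x y ≠ 0) :
    Filter.Tendsto (fun t => |U a₀ a₁ a₂ a₃ a₄ a₅ a₆ x y t|)
      (nhdsWithin (-1 / (12 * a₀ * a₃)) (Set.Iio (-1 / (12 * a₀ * a₃)))) Filter.atTop := by
  have ha0 : a₀ ≠ 0 := fun h0 => by simp [h0] at h₀₃
  have hk : 12 * a₀ * a₃ < 0 := by nlinarith
  have hc : a₀ * P a₁ a₂ a₃ x y ≠ 0 ∨ C a₁ a₂ a₃ ≠ 0 := by
    rcases h with hC | hP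
    · exact Or.inr hC
    · exact Or.inl (mul_ne_zero ha0 hP)
  have hkey := key (12 * a₀ * a₃) (a₄ * x + a₅ * y + a₆) (a₀ * P a₁ a₂ a₃ x y)
    (C a₁ a₂ a₃) hk hc
  apply hkey.congr
  intro t
  simp only [U]
  congr 1
  ring
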